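/- Let n ≥ 2 and let b_{n,m} denote the coefficient of x^m in the n-th Nekrasov–Okounkov polynomial Q_n(x). Then b_{n,n−1}^2 > b_{n,n−2} · b_{n,n}. -/

import Mathlib

open Finset Polynomial
open Nat

/-- The recursively defined polynomials `P_n^{g,h}` attached to arithmetic functions
`g, h : ℕ → ℝ` (values at `0` are irrelevant): `P_0 = 1` and
`P_n(x) = (x / h(n)) · Σ_{k=1}^n g(k) · P_{n-k}(x)`. -/
noncomputable def Ppoly (g h : ℕ → ℝ) : ℕ → Polynomial ℝ
  | 0 => 1
  | (n+1) => Polynomial.C (h (n+1))⁻¹ * Polynomial.X *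
      ∑ k ∈ Finset.range (n+1), Polynomial.C (g (k+1)) * Ppoly g h (n - k)
  termination_by n => n
  decreasing_by all_goals (simp_wf; try omega)

/-- `A_{n,m}^{g,h}`: the coefficient of `x^m` in `(∏_{k=1}^n h(k)) · P_n^{g,h}(x)`. -/
noncomputable def Acoeff (g h : ℕ → ℝ) (n m : ℕ) : ℝ :=
  (∏ k ∈ Finset.Icc 1 n, h k) * (Ppoly g h n).coeff m

/-- `h` extended by the convention `h(0) := 0`. -/
noncomputable def hExt (h : ℕ → ℝ) (n : ℕ) : ℝ := if n = 0 then 0 else h n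

/-- `h_m(n) = ∏_{k=0}^{m-1} h(n-k)` (with the convention `h(0) := 0`). -/
noncomputable def hIter (h : ℕ → ℝ) (m n : ℕ) : ℝ :=
  ∏ k ∈ Finset.range m, hExt h (n - k)

/-- Helper for `H(μ,n)`: defined on reversed compositions, peeling off the head
(which is the last part `μ_{r+1}` of the original composition). -/
noncomputable def Hrev (h : ℕ → ℝ) : List ℕ → ℕ → ℝ
  | [], _ => 1
  | (a :: t), n =>
      if n < (a :: t).sum + (a :: t).length then 0
      else ∑ k ∈ Finset.Ico ((a :: t).sum + (a :: t).length - 1) n,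
        hIter h a k * Hrev h t (k - a)

/-- `H(μ, n)` for a composition `μ` (a list of positive integers): `H(ε,n) = 1`,
`H(μ,n) = Σ_{k=|μ|+ℓ(μ)-1}^{n-1} h_{μ_{r+1}}(k) · H((μ_1,…,μ_r), k - μ_{r+1})`
if `n ≥ |μ| + ℓ(μ)`, and `0` otherwise. -/
noncomputable def HFun (h : ℕ → ℝ) (μ : List ℕ) (n : ℕ) : ℝ := Hrev h μ.reverse n

/-- `𝓗(μ, n) = Σ_{λ ∈ Orb(μ)} H(λ, n)`: sum over all distinct rearrangements of `μ`. -/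
noncomputable def HCal (h : ℕ → ℝ) (μ : List ℕ) (n : ℕ) : ℝ :=
  ∑ lam ∈ μ.permutations.toFinset, HFun h lam n

/-- `𝓖(μ) = ∏_{k=1}^{ℓ(μ)} g(μ_k + 1)`. -/
noncomputable def GCal (g : ℕ → ℝ) (μ : List ℕ) : ℝ := (μ.map (fun p => g (p + 1))).prod

noncomputable def sigR : ℕ → ℝ := fun k => ((∑ d ∈ Nat.divisors k, d : ℕ) : ℝ)
noncomputable def idR : ℕ → ℝ := fun k => (k : ℝ)

lemma Ppoly_succ (g h : ℕ → ℝ) (n : ℕ) :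
    Ppoly g h (n+1) = Polynomial.C (h (n+1))⁻¹ * Polynomial.X *
      ∑ k ∈ Finset.range (n+1), Polynomial.C (g (k+1)) * Ppoly g h (n - k) := by
  rw [Ppoly.eq_2]

lemma sigR_one : sigR 1 = 1 := by norm_num [sigR]
lemma sigR_two : sigR 2 = 3 := by norm_num [sigR]
lemma sigR_three : sigR 3 = 4 := by norm_num [sigR]

lemma natDegree_Ppoly_le (g h : ℕ → ℝ) (n : ℕ) : (Ppoly g h n).natDegree ≤ n := by
  induction n using Nat.strong_induction_on with
  | _ n ih =>
    match n with
    | 0 => simp [Ppoly.eq_1]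
    | (m+1) =>
      rw [Ppoly_succ]
      refine le_trans (natDegree_mul_le) ?_
      have h1 : (Polynomial.C (h (m+1))⁻¹ * Polynomial.X).natDegree ≤ 1 :=
        le_trans natDegree_mul_le (by simp)
      have h2 : (∑ k ∈ Finset.range (m+1), Polynomial.C (g (k+1)) * Ppoly g h (m - k)).natDegree ≤ m := by
        refine natDegree_sum_le_of_forall_le _ _ fun k hk => ?_
        refine le_trans natDegree_mul_le ?_
        simp only [natDegree_C, zero_add]
        exact le_trans (ih (m - k) (by omega)) (by omega)
      omega

lemma Ppoly_coeff_eq_zero (g h : ℕ → ℝ) {n m : ℕ} (hm : n < m) :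
    (Ppoly g h n).coeff m = 0 :=
  coeff_eq_zero_of_natDegree_lt (lt_of_le_of_lt (natDegree_Ppoly_le g h n) hm)

lemma Ppoly_coeff_zero (g h : ℕ → ℝ) (n : ℕ) : (Ppoly g h (n+1)).coeff 0 = 0 := by
  rw [Ppoly_succ]
  simp [mul_coeff_zero]

lemma coeff_rec (n m : ℕ) :
    (Ppoly sigR idR (n+1)).coeff (m+1)
      = ((n:ℝ)+1)⁻¹ * ∑ k ∈ Finset.range (n+1), sigR (k+1) * (Ppoly sigR idR (n-k)).coeff m := by
  rw [Ppoly_succ, mul_assoc, coeff_C_mul, coeff_X_mul, finset_sum_coeff]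
  simp only [coeff_C_mul, idR]
  push_cast
  ring
lemma coeff_A : ∀ n : ℕ, (Ppoly sigR idR n).coeff n = ((n ! : ℝ))⁻¹ := by
  intro n
  induction n with
  | zero => simp [Ppoly.eq_1]
  | succ n ih =>
    rw [coeff_rec]
    rw [Finset.sum_eq_single_of_mem 0 (by simp) ?side]
    · rw [Nat.sub_zero, ih, sigR_one]
      have : ((n+1) ! : ℝ) = ((n:ℝ)+1) * (n ! : ℝ) := by
        rw [Nat.factorial_succ]; push_cast; ring
      rw [this, mul_inv, one_mul]
    case side =>
      intro k hk hk0
      rw [Ppoly_coeff_eq_zero sigR idR (by simp at hk; omega), mul_zero]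

lemma coeff_B : ∀ n : ℕ, (Ppoly sigR idR (n+1)).coeff n = 3*(n:ℝ)/(2*(n ! : ℝ)) := by
  intro n
  induction n with
  | zero => simp [Ppoly_coeff_zero]
  | succ n ih =>
    rw [coeff_rec, Finset.sum_range_succ', Finset.sum_range_succ']
    have hz : ∀ k ∈ Finset.range n,
        sigR (k+1+1+1) * (Ppoly sigR idR (n+1 - (k+1+1))).coeff n = 0 := by
      intro k hk
      rw [Ppoly_coeff_eq_zero sigR idR (by simp at hk; omega), mul_zero]
    rw [Finset.sum_eq_zero hz, zero_add]
    simp only [Nat.sub_zero, Nat.add_sub_cancel]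
    rw [ih, coeff_A, sigR_one, sigR_two]
    have hf : ((n+1) ! : ℝ) = ((n:ℝ)+1) * (n ! : ℝ) := by
      rw [Nat.factorial_succ]; push_cast; ring
    have hne : (n ! : ℝ) ≠ 0 := by positivity
    rw [hf]
    push_cast
    field_simp
    ring

lemma coeff_Cc : ∀ n : ℕ, (Ppoly sigR idR (n+2)).coeff n
    = (4*(n:ℝ)/3 + 9*(n:ℝ)*((n:ℝ)-1)/8) / (n ! : ℝ) := by
  intro n
  induction n with
  | zero => simp [Ppoly_coeff_zero]
  | succ n ih =>
    rw [show n+1+2 = (n+2)+1 by ring, coeff_rec,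
      Finset.sum_range_succ', Finset.sum_range_succ', Finset.sum_range_succ']
    have hz : ∀ k ∈ Finset.range n,
        sigR (k+1+1+1+1) * (Ppoly sigR idR (n+2 - (k+1+1+1))).coeff n = 0 := by
      intro k hk
      rw [Ppoly_coeff_eq_zero sigR idR (by simp at hk; omega), mul_zero]
    rw [Finset.sum_eq_zero hz, zero_add]
    simp only [Nat.sub_zero]
    rw [show n+2-1 = n+1 by omega, show n+2-2 = n by omega]
    rw [ih, coeff_B, coeff_A, sigR_one, sigR_two, sigR_three]
    have hf : ((n+1) ! : ℝ) = ((n:ℝ)+1) * (n ! : ℝ) := by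
      rw [Nat.factorial_succ]; push_cast; ring
    have hne : (n ! : ℝ) ≠ 0 := by positivity
    rw [hf]
    push_cast
    field_simp
    ring

lemma comp_coeff (P : Polynomial ℝ) (d : ℕ) (hd : P.natDegree < d + 1) (m : ℕ) :
    (P.comp (Polynomial.X - 1)).coeff m
      = ∑ j ∈ Finset.range (d+1), P.coeff j * ((-1:ℝ))^(j-m) * (j.choose m : ℝ) := by
  have hX : (Polynomial.X - 1 : Polynomial ℝ) = Polynomial.X + Polynomial.C (-1) := by
    simp [sub_eq_add_neg]
  conv_lhs => rw [P.as_sum_range' (d+1) hd, ← coe_compRingHom_apply, map_sum]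
  rw [finset_sum_coeff]
  refine Finset.sum_congr rfl fun j _ => ?_
  rw [coe_compRingHom_apply, monomial_comp, hX, coeff_C_mul, coeff_X_add_C_pow]
  ring

/-- The `n`-th Nekrasov–Okounkov polynomial, defined (via the hook length formula)
as `Q_n(x) = P_n^{σ,id}(x - 1)` where `σ(k) = Σ_{d ∣ k} d`. -/
noncomputable def NekrasovOkounkov (n : ℕ) : Polynomial ℝ :=
  (Ppoly (fun k => ((∑ d ∈ Nat.divisors k, d : ℕ) : ℝ)) (fun k => (k : ℝ)) n).comp
    (Polynomial.X - 1)

/-- `b_{n,n-1}² > b_{n,n-2} · b_{n,n}` for the Nekrasov–Okounkov polynomials, `n ≥ 2`. -/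
theorem NO_top_log_concavity (n : ℕ) (hn : 2 ≤ n) :
    ((NekrasovOkounkov n).coeff (n - 1)) ^ 2 >
      (NekrasovOkounkov n).coeff (n - 2) * (NekrasovOkounkov n).coeff n := by
  obtain ⟨p, rfl⟩ : ∃ p, n = p + 2 := ⟨n - 2, by omega⟩
  have hNO : NekrasovOkounkov (p+2) = (Ppoly sigR idR (p+2)).comp (Polynomial.X - 1) := rfl
  have hdeg : (Ppoly sigR idR (p+2)).natDegree < (p+2) + 1 :=
    lt_of_le_of_lt (natDegree_Ppoly_le _ _ _) (by omega)
  have key : ∀ m, p ≤ m → (NekrasovOkounkov (p+2)).coeff m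
      = (Ppoly sigR idR (p+2)).coeff p * (-1:ℝ)^(p-m) * (p.choose m : ℝ)
      + (Ppoly sigR idR (p+2)).coeff (p+1) * (-1:ℝ)^(p+1-m) * ((p+1).choose m : ℝ)
      + (Ppoly sigR idR (p+2)).coeff (p+2) * (-1:ℝ)^(p+2-m) * ((p+2).choose m : ℝ) := by
    intro m hm
    rw [hNO, comp_coeff _ (p+2) hdeg m, Finset.sum_range_succ, Finset.sum_range_succ,
      Finset.sum_range_succ, Finset.sum_eq_zero (fun j hj => ?_)]
    · ring
    · have hj' : j < m := by simp only [Finset.mem_range] at hj; omega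
      rw [Nat.choose_eq_zero_of_lt hj']
      push_cast; ring
  -- coefficient values
  set r : ℝ := (p : ℝ) with hrdef
  have hr : 0 ≤ r := Nat.cast_nonneg p
  set t : ℝ := (p ! : ℝ) with ht'
  have ht : 0 < t := by positivity
  have htne : t ≠ 0 := ne_of_gt ht
  have hr1 : (0:ℝ) < r + 1 := by linarith
  have hr2 : (0:ℝ) < r + 2 := by linarith
  have ha0 : (Ppoly sigR idR (p+2)).coeff p = (4*r/3 + 9*r*(r-1)/8) / t := coeff_Cc p
  have ha1 : (Ppoly sigR idR (p+2)).coeff (p+1) = 3*(r+1)/(2*((r+1)*t)) := by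
    have := coeff_B (p+1)
    rw [Nat.factorial_succ] at this
    rw [show p+1+1 = p+2 by ring] at this
    rw [this]; push_cast; ring_nf; rfl
  have ha2 : (Ppoly sigR idR (p+2)).coeff (p+2) = ((r+2)*((r+1)*t))⁻¹ := by
    have := coeff_A (p+2)
    rw [Nat.factorial_succ, Nat.factorial_succ] at this
    rw [this]; push_cast; ring_nf; rfl
  -- the three b-coefficients
  have hb2 : (NekrasovOkounkov (p+2)).coeff (p+2) = 1/((r+2)*(r+1)*t) := by
    rw [key (p+2) (by omega), ha2,
      Nat.choose_eq_zero_of_lt (by omega : p < p+2),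
      Nat.choose_eq_zero_of_lt (by omega : p+1 < p+2), Nat.choose_self]
    simp only [Nat.sub_self, pow_zero]
    push_cast
    field_simp
    ring
  have hb1 : (NekrasovOkounkov (p+1+1)).coeff (p+1) = (3*r+1)/(2*(r+1)*t) := by
    rw [show p+1+1 = p+2 by ring, key (p+1) (by omega), ha1, ha2,
      Nat.choose_eq_zero_of_lt (by omega : p < p+1), Nat.choose_self,
      Nat.choose_succ_self_right]
    have h1 : p+1-(p+1) = 0 := by omega
    have h2 : p+2-(p+1) = 1 := by omega
    rw [h1, h2]
    push_cast
    field_simp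
    ring
  have hb0 : (NekrasovOkounkov (p+2)).coeff p = (27*r^2-31*r-24)/(24*t) := by
    have hch : (((p+2).choose p : ℕ) : ℝ) = (r+2)*(r+1)/2 := by
      rw [show (p+2).choose p = (p+2).choose 2 by
        rw [show p = (p+2)-2 by omega]; exact Nat.choose_symm (by omega)]
      rw [Nat.cast_choose_two]
      push_cast; ring
    rw [key p (by omega), ha0, ha1, ha2, Nat.choose_self, Nat.choose_succ_self_right, hch]
    have h1 : p-p = 0 := by omega
    have h2 : p+1-p = 1 := by omega
    have h3 : p+2-p = 2 := by omega
    rw [h1, h2, h3]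
    push_cast
    field_simp
    ring
  rw [show p+2-1 = p+1 by omega, show p+2-2 = p by omega, hb1, hb0]
  rw [show p+2 = p+1+1 from rfl] at hb2
  rw [show (p:ℕ)+1+1 = p+2 from rfl] at hb2
  rw [hb2]
  rw [gt_iff_lt, div_pow, _root_.div_mul_div_comm, mul_one]
  have hpos1 : (0:ℝ) < (2*(r+1)*t)^2 := by positivity
  have hpos2 : (0:ℝ) < 24*t*((r+2)*(r+1)*t) := by
    have : (0:ℝ) < (r+2)*(r+1)*t := by positivity
    positivity
  rw [div_lt_div_iff₀ hpos2 hpos1]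
  have keyineq : (27*r^2-31*r-24) * (4*(r+1)^2) < (3*r+1)^2 * (24*(r+2)*(r+1)) := by
    nlinarith [hr, mul_nonneg hr hr, mul_nonneg (mul_nonneg hr hr) hr,
      mul_nonneg (mul_nonneg (mul_nonneg hr hr) hr) hr]
  nlinarith [mul_lt_mul_of_pos_right keyineq (mul_pos ht ht)]
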